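/- Correctness of the acyclic tuple-sensitivity algorithm (TSens): in the join-tree model, for every vertex i and every tuple t ∈ Π_{A ∈ 𝔸_i} V(A), the upward tuple sensitivity factorizes as δ⁺(t,i) = ⊤_i(t|_{S_i}) · ∏_{c ∈ children(i)} ⊥_c(t|_{S_c}) (where the factor ⊤_i(t|_{S_i}) equals 1 when i is the root, and the product over children is empty, hence 1, when i is a leaf). -/

import Mathlib

open Finset
open scoped Classical

/-- `inSub p i j`: vertex `j` belongs to `T(i)`, the subtree rooted at `i`, where `p` is
the parent function of the rooted tree (iterating `p` from `j` reaches `i`). -/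
def inSub {m : ℕ} (p : Fin m → Fin m) (i j : Fin m) : Prop :=
  ∃ k : ℕ, p^[k] j = i

/-- The separator `S_i = 𝔸_i ∩ 𝔸_{p(i)}` of a non-root vertex `i`; `S_r = ∅` for the
root `r`. -/
def sepAttr {m : ℕ} {A : Type} [DecidableEq A] (Atr : Fin m → Finset A)
    (p : Fin m → Fin m) (r : Fin m) (i : Fin m) : Finset A :=
  if i = r then ∅ else Atr i ∩ Atr (p i)

/-- The attributes `⋃_{j ∈ T(i)} 𝔸_j` appearing in the subtree rooted at `i`. -/
noncomputable def subAttr {m : ℕ} {A : Type} [DecidableEq A]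
    (Atr : Fin m → Finset A) (p : Fin m → Fin m) (i : Fin m) : Finset A :=
  (Finset.univ.filter fun j => inSub p i j).biUnion Atr

/-- The attributes `⋃_{j ∉ T(i)} 𝔸_j` appearing outside the subtree rooted at `i`. -/
noncomputable def topAttr {m : ℕ} {A : Type} [DecidableEq A]
    (Atr : Fin m → Finset A) (p : Fin m → Fin m) (i : Fin m) : Finset A :=
  (Finset.univ.filter fun j => ¬ inSub p i j).biUnion Atr

/-- Restriction of a partial assignment on `B` to a partial assignment on `C`
(intended for `C ⊆ B`; outside `B` an arbitrary value is used). -/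
noncomputable def restrAny {A : Type} (V : A → Type) [∀ a, Nonempty (V a)]
    {B C : Finset A} (w : ∀ a : {x // x ∈ B}, V a.val) : ∀ a : {x // x ∈ C}, V a.val :=
  fun a => if h : a.val ∈ B then w ⟨a.val, h⟩ else Classical.arbitrary _

/-- The botjoin `⊥_i : Π_{A ∈ S_i} V(A) → ℕ`:
`⊥_i(u) = Σ_{w on ⋃_{j ∈ T(i)} 𝔸_j, w|_{S_i} = u} ∏_{j ∈ T(i)} R_j(w|_{𝔸_j})`. -/
noncomputable def botJ {m : ℕ} {A : Type} [Fintype A] [DecidableEq A]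
    (V : A → Type) [∀ a, Fintype (V a)] [∀ a, Nonempty (V a)]
    (Atr : Fin m → Finset A) (p : Fin m → Fin m) (r : Fin m)
    (R : ∀ i : Fin m, (∀ a : {x // x ∈ Atr i}, V a.val) → ℕ)
    (i : Fin m) (u : ∀ a : {x // x ∈ sepAttr Atr p r i}, V a.val) : ℕ :=
  ∑ w : (∀ a : {x // x ∈ subAttr Atr p i}, V a.val),
    if restrAny V w = u then
      ∏ j ∈ Finset.univ.filter (fun j => inSub p i j), R j (restrAny V w)
    else 0

/-- The topjoin `⊤_i : Π_{A ∈ S_i} V(A) → ℕ`: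
`⊤_i(u) = Σ_{w on ⋃_{j ∉ T(i)} 𝔸_j, w|_{S_i} = u} ∏_{j ∉ T(i)} R_j(w|_{𝔸_j})`
(for the root `r`, `⊤_r` is constantly `1` on the empty assignment). -/
noncomputable def topJ {m : ℕ} {A : Type} [Fintype A] [DecidableEq A]
    (V : A → Type) [∀ a, Fintype (V a)] [∀ a, Nonempty (V a)]
    (Atr : Fin m → Finset A) (p : Fin m → Fin m) (r : Fin m)
    (R : ∀ i : Fin m, (∀ a : {x // x ∈ Atr i}, V a.val) → ℕ)
    (i : Fin m) (u : ∀ a : {x // x ∈ sepAttr Atr p r i}, V a.val) : ℕ :=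
  ∑ w : (∀ a : {x // x ∈ topAttr Atr p i}, V a.val),
    if restrAny V w = u then
      ∏ j ∈ Finset.univ.filter (fun j => ¬ inSub p i j), R j (restrAny V w)
    else 0

section
variable (m : ℕ) (A : Type) [Fintype A] [DecidableEq A] (V : A → Type)
  [∀ a, Fintype (V a)] [∀ a, DecidableEq (V a)]
  (S : Fin m → Finset A)
  (R : ∀ i : Fin m, (∀ a : {x // x ∈ S i}, V a.val) → ℕ)

/-- The output count (under bag semantics) of the full conjunctive query
`Q(𝔸) :- R_1(𝔸_1), …, R_m(𝔸_m)`: `Q(D) = Σ_{w ∈ Π_{A∈𝔸} V(A)} ∏_i R_i(w|_{𝔸_i})`. -/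
def QC : ℕ :=
  ∑ w : (∀ a : A, V a), ∏ i : Fin m, R i fun a => w a.val

/-- Insert one copy of the tuple `t` into relation `R_i`. -/
def insR (i : Fin m) (t : ∀ a : {x // x ∈ S i}, V a.val) :
    ∀ j : Fin m, (∀ a : {x // x ∈ S j}, V a.val) → ℕ :=
  Function.update R i fun s => if s = t then R i s + 1 else R i s

/-- Upward tuple sensitivity `δ⁺(t,i)`: the increase of the output count caused by
inserting `t` into `R_i`. -/
def deltaP (i : Fin m) (t : ∀ a : {x // x ∈ S i}, V a.val) : ℕ :=
  QC m A V S (insR m A V S R i t) - QC m A V S R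

end
section Helpers
variable {A : Type} [Fintype A] [DecidableEq A] {V : A → Type}
  [∀ a, Fintype (V a)] [∀ a, Nonempty (V a)]

lemma restr_restr {B B' C : Finset A} (h : C ⊆ B') (w : ∀ a : {x // x ∈ B}, V a.val) :
    (restrAny V (C := C) (restrAny V (C := B') w)) = restrAny V (C := C) w := by
  funext a
  have hB' : a.val ∈ B' := h a.2
  simp only [restrAny, dif_pos hB']
  split <;> rfl

lemma restr_eval {B B' C : Finset A} {u : ∀ a : {x // x ∈ B}, V a.val}
    {v : ∀ a : {x // x ∈ B'}, V a.val}
    (h : restrAny V (C := C) u = restrAny V (C := C) v)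
    {a : A} (hC : a ∈ C) (hB : a ∈ B) (hB' : a ∈ B') :
    u ⟨a, hB⟩ = v ⟨a, hB'⟩ := by
  have := congrFun h ⟨a, hC⟩
  simpa only [restrAny, dif_pos hB, dif_pos hB'] using this

lemma restr_full {C : Finset A} (w : ∀ a : A, V a) :
    restrAny V (C := C) (fun a : {x // x ∈ (Finset.univ : Finset A)} => w a.val)
      = fun a : {x // x ∈ C} => w a.val := by
  funext a
  simp only [restrAny, dif_pos (Finset.mem_univ a.val)]

/-- Key splitting lemma: a sum over assignments of `B ∪ C` of a product of a factor
depending on `B` and a factor depending on `C` factorizes, provided the two factors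
pin down the values on `B ∩ C` consistently. -/
lemma split_sum (B C : Finset A) (f : (∀ a : {x // x ∈ B}, V a.val) → ℕ)
    (g : (∀ a : {x // x ∈ C}, V a.val) → ℕ)
    (hcompat : ∀ u v, f u ≠ 0 → g v ≠ 0 →
      restrAny V (C := B ∩ C) u = restrAny V (C := B ∩ C) v) :
    ∑ w : (∀ a : {x // x ∈ B ∪ C}, V a.val), f (restrAny V w) * g (restrAny V w)
      = (∑ u, f u) * (∑ v, g v) := by
  classical
  rw [Finset.sum_mul_sum]
  rw [← Finset.sum_product']
  have hfilter : ∑ q ∈ (Finset.univ : Finset ((∀ a : {x // x ∈ B}, V a.val) ×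
        (∀ a : {x // x ∈ C}, V a.val))).filter
        (fun q => restrAny V (C := B ∩ C) q.1 = restrAny V (C := B ∩ C) q.2),
        f q.1 * g q.2
      = ∑ q : (∀ a : {x // x ∈ B}, V a.val) × (∀ a : {x // x ∈ C}, V a.val),
          f q.1 * g q.2 := by
    apply Finset.sum_filter_of_ne
    intro q _ hne
    have hf : f q.1 ≠ 0 := fun h => hne (by simp [h])
    have hg : g q.2 ≠ 0 := fun h => hne (by simp [h])
    exact hcompat _ _ hf hg
  rw [Finset.univ_product_univ]
  rw [← hfilter]
  apply Finset.sum_nbij'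
    (i := fun w : (∀ a : {x // x ∈ B ∪ C}, V a.val) =>
      ((restrAny V w, restrAny V w) :
        (∀ a : {x // x ∈ B}, V a.val) × (∀ a : {x // x ∈ C}, V a.val)))
    (j := fun q : (∀ a : {x // x ∈ B}, V a.val) × (∀ a : {x // x ∈ C}, V a.val) =>
      fun a : {x // x ∈ B ∪ C} =>
      (if h : a.val ∈ B then q.1 ⟨a.val, h⟩ else
        q.2 ⟨a.val, (Finset.mem_union.mp a.2).resolve_left h⟩ : V a.val))
  · intro w _
    simp only [Finset.mem_filter, Finset.mem_univ, true_and]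
    rw [restr_restr Finset.inter_subset_left, restr_restr Finset.inter_subset_right]
  · intro q _
    exact Finset.mem_univ _
  · intro w _
    funext a
    rcases Finset.mem_union.mp a.2 with h | h
    · simp only [restrAny, dif_pos h, dif_pos (Finset.mem_union_left C h)]
    · by_cases hB : a.val ∈ B
      · simp only [dif_pos hB, restrAny, dif_pos (Finset.mem_union_left C hB)]
      · simp only [dif_neg hB, restrAny, dif_pos (Finset.mem_union_right B h)]
  · intro q hq
    simp only [Finset.mem_filter, Finset.mem_univ, true_and] at hq
    ext a
    · simp only [restrAny, dif_pos (Finset.mem_union_left C a.2), dif_pos a.2]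
    · simp only [restrAny, dif_pos (Finset.mem_union_right B a.2)]
      by_cases hB : a.val ∈ B
      · simp only [dif_pos hB]
        exact restr_eval hq (Finset.mem_inter.mpr ⟨hB, a.2⟩) hB a.2
      · simp only [dif_neg hB]
  · intro w _
    rfl

lemma multi_split {ι : Type*} (J : Finset ι) (Bl : ι → Finset A)
    (h : ∀ j : ι, (∀ a : {x // x ∈ Bl j}, V a.val) → ℕ)
    (compat : ∀ j ∈ J, ∀ j' ∈ J, j ≠ j' → ∀ u v, h j u ≠ 0 → h j' v ≠ 0 →
      restrAny V (C := Bl j ∩ Bl j') u = restrAny V (C := Bl j ∩ Bl j') v) :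
    ∑ w : (∀ a : {x // x ∈ J.biUnion Bl}, V a.val), ∏ j ∈ J, h j (restrAny V w)
      = ∏ j ∈ J, ∑ u, h j u := by
  classical
  induction J using Finset.induction_on with
  | empty =>
    simp only [Finset.biUnion_empty, Finset.prod_empty]
    haveI : IsEmpty {x : A // x ∈ (∅ : Finset A)} := ⟨fun a => Finset.notMem_empty _ a.2⟩
    simp
    exact Finset.card_eq_one.mpr ⟨fun a => isEmptyElim a,
      Finset.eq_singleton_iff_unique_mem.mpr ⟨Finset.mem_univ _, fun f _ => funext fun a => isEmptyElim a⟩⟩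
  | @insert j0 J' hj0 ih =>
    rw [Finset.biUnion_insert, Finset.prod_insert hj0]
    have key : ∑ w : (∀ a : {x // x ∈ Bl j0 ∪ J'.biUnion Bl}, V a.val),
        h j0 (restrAny V w) * (∏ j ∈ J', h j (restrAny V (restrAny V (C := J'.biUnion Bl) w)))
        = (∑ u, h j0 u) * (∑ v : (∀ a : {x // x ∈ J'.biUnion Bl}, V a.val),
            ∏ j ∈ J', h j (restrAny V v)) := by
      refine split_sum (Bl j0) (J'.biUnion Bl) (h j0)
        (fun v => ∏ j ∈ J', h j (restrAny V v)) ?_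
      intro u v hu hv
      funext a
      have haB : a.val ∈ Bl j0 := Finset.mem_inter.mp a.2 |>.1
      obtain ⟨j, hjJ', haj⟩ := Finset.mem_biUnion.mp (Finset.mem_inter.mp a.2).2
      have hvj : h j (restrAny V v) ≠ 0 := by
        intro h0
        exact hv (Finset.prod_eq_zero hjJ' h0)
      have hne : j0 ≠ j := fun e => hj0 (e ▸ hjJ')
      have hcmp := compat j0 (Finset.mem_insert_self _ _) j
        (Finset.mem_insert_of_mem hjJ') hne u (restrAny V v) hu hvj
      have hval := restr_eval hcmp (Finset.mem_inter.mpr ⟨haB, haj⟩) haB haj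
      simp only [restrAny, dif_pos haB,
        dif_pos (Finset.mem_biUnion.mpr ⟨j, hjJ', haj⟩)] at hval ⊢
      exact hval
    have step : ∀ w : (∀ a : {x // x ∈ Bl j0 ∪ J'.biUnion Bl}, V a.val),
        ∏ j ∈ insert j0 J', h j (restrAny V w)
          = h j0 (restrAny V w) * ∏ j ∈ J', h j (restrAny V (restrAny V (C := J'.biUnion Bl) w)) := by
      intro w
      rw [Finset.prod_insert hj0]
      congr 1
      apply Finset.prod_congr rfl
      intro j hjJ'
      rw [restr_restr (fun a ha => Finset.mem_biUnion.mpr ⟨j, hjJ', ha⟩)]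
    calc ∑ w : (∀ a : {x // x ∈ Bl j0 ∪ J'.biUnion Bl}, V a.val),
          ∏ j ∈ insert j0 J', h j (restrAny V w)
        = ∑ w : (∀ a : {x // x ∈ Bl j0 ∪ J'.biUnion Bl}, V a.val),
            h j0 (restrAny V w) * ∏ j ∈ J', h j (restrAny V (restrAny V (C := J'.biUnion Bl) w)) :=
          Finset.sum_congr rfl (fun w _ => step w)
      _ = (∑ u, h j0 u) * (∑ v : (∀ a : {x // x ∈ J'.biUnion Bl}, V a.val),
            ∏ j ∈ J', h j (restrAny V v)) := key
      _ = (∑ u, h j0 u) * ∏ j ∈ J', ∑ u, h j u := by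
          rw [ih (fun j hj j' hj' => compat j (Finset.mem_insert_of_mem hj) j'
            (Finset.mem_insert_of_mem hj'))]
end Helpers
section Tree
variable {m : ℕ} {p : Fin m → Fin m} {r : Fin m}

lemma inSub_self (i : Fin m) : inSub p i i := ⟨0, rfl⟩

lemma inSub_trans {i j k : Fin m} (h1 : inSub p i j) (h2 : inSub p j k) : inSub p i k := by
  obtain ⟨a, ha⟩ := h1; obtain ⟨b, hb⟩ := h2
  exact ⟨a + b, by rw [Function.iterate_add_apply, hb, ha]⟩

lemma iter_root (hroot : p r = r) (k : ℕ) : p^[k] r = r := by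
  induction k with
  | zero => rfl
  | succ n ih => rw [Function.iterate_succ_apply', ih, hroot]

/-- Acyclicity: a non-root vertex is not in the subtree of its parent's... rather,
`p i` is not in the subtree `T(i)` when `i ≠ r`. -/
lemma not_inSub_parent (hroot : p r = r) (hreach : ∀ i : Fin m, ∃ k : ℕ, p^[k] i = r)
    {i : Fin m} (hir : i ≠ r) : ¬ inSub p i (p i) := by
  rintro ⟨k, hk⟩
  have hcyc : p^[k + 1] i = i := by rw [Function.iterate_succ_apply]; exact hk
  obtain ⟨l, hl⟩ := hreach i
  have hper : ∀ n : ℕ, p^[n * (k + 1)] i = i := by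
    intro n
    induction n with
    | zero => simp
    | succ n ih => rw [Nat.succ_mul, Function.iterate_add_apply, hcyc, ih]
  have hbig : l ≤ l * (k + 1) := Nat.le_mul_of_pos_right l (Nat.succ_pos k)
  have : p^[l * (k + 1)] i = r := by
    rw [← Nat.sub_add_cancel hbig, Function.iterate_add_apply, hl,
      iter_root hroot]
  exact hir ((hper l).symm.trans this)

lemma parent_mem {i x : Fin m} (hx : inSub p i x) (hxi : x ≠ i) : inSub p i (p x) := by
  obtain ⟨k, hk⟩ := hx
  cases k with
  | zero => exact absurd hk hxi
  | succ n => exact ⟨n, by rw [← Function.iterate_succ_apply]; exact hk⟩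

/-- If `j ∈ T(i)` but `p^[k] j ∉ T(i)`, the path passes through `i`. -/
lemma exit_through (i : Fin m) : ∀ (k : ℕ) (j : Fin m), inSub p i j →
    ¬ inSub p i (p^[k] j) → ∃ l < k, p^[l] j = i := by
  intro k
  induction k with
  | zero => intro j hj hnj; exact absurd hj hnj
  | succ n ih =>
    intro j hj hnj
    have he : p^[n + 1] j = p^[n] (p j) := Function.iterate_succ_apply p n j
    by_cases hpj : inSub p i (p j)
    · obtain ⟨l, hl, hli⟩ := ih (p j) hpj (by rw [he] at hnj; exact hnj)
      have he' : p^[l + 1] j = p^[l] (p j) := Function.iterate_succ_apply p l j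
      exact ⟨l + 1, Nat.succ_lt_succ hl, by rw [he']; exact hli⟩
    · refine ⟨0, Nat.succ_pos n, ?_⟩
      by_contra hne
      exact hpj (parent_mem hj hne)

lemma child_of (hroot : p r = r) (hreach : ∀ i : Fin m, ∃ k : ℕ, p^[k] i = r)
    {i j : Fin m} (hj : inSub p i j) (hji : j ≠ i) :
    ∃ c : Fin m, p c = i ∧ c ≠ r ∧ inSub p c j := by
  obtain ⟨k, hk⟩ := hj
  induction k with
  | zero => exact absurd hk hji
  | succ n ih =>
    by_cases hn : p^[n] j = i
    · exact ih hn
    · have hpc : p (p^[n] j) = i := by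
        rw [← Function.iterate_succ_apply' p n j]; exact hk
      refine ⟨p^[n] j, hpc, ?_, ⟨n, rfl⟩⟩
      intro hr
      apply hn
      rw [hr]
      rw [hr] at hpc
      exact hroot.symm.trans hpc

lemma child_sub {i c j : Fin m} (hc : p c = i) (hj : inSub p c j) : inSub p i j := by
  obtain ⟨k, hk⟩ := hj
  exact ⟨k + 1, by rw [Function.iterate_succ_apply', hk, hc]⟩

lemma not_inSub_child (hroot : p r = r) (hreach : ∀ i : Fin m, ∃ k : ℕ, p^[k] i = r)
    {i c : Fin m} (hc : p c = i) (hcr : c ≠ r) : ¬ inSub p c i := by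
  intro h
  exact not_inSub_parent hroot hreach hcr (hc ▸ h)

lemma children_disjoint (hroot : p r = r) (hreach : ∀ i : Fin m, ∃ k : ℕ, p^[k] i = r)
    {i c c' j : Fin m} (hc : p c = i) (hcr : c ≠ r) (hc' : p c' = i) (hcr' : c' ≠ r)
    (hne : c ≠ c') (h1 : inSub p c j) : ¬ inSub p c' j := by
  rintro ⟨k', hk'⟩
  obtain ⟨k, hk⟩ := h1
  rcases Nat.le_total k k' with hle | hle
  · rcases Nat.lt_or_ge k k' with hlt | hge
    · have : p^[k' - k] c = c' := by
        rw [← hk, ← Function.iterate_add_apply, Nat.sub_add_cancel hle, hk']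
      have hpos : 1 ≤ k' - k := Nat.le_sub_of_add_le (by omega)
      have : p^[k' - k - 1] i = c' := by
        rw [← hc, ← Function.iterate_succ_apply]
        have hsucc : k' - k - 1 + 1 = k' - k := Nat.succ_pred_eq_of_pos hpos
        rw [Nat.succ_eq_add_one, hsucc]
        rw [← hk, ← Function.iterate_add_apply, Nat.sub_add_cancel hle, hk']
      exact not_inSub_child hroot hreach hc' hcr' ⟨k' - k - 1, this⟩
    · have : k = k' := le_antisymm hle hge
      subst this
      exact hne (hk.symm.trans hk')
  · rcases Nat.lt_or_ge k' k with hlt | hge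
    · have hpos : 1 ≤ k - k' := Nat.le_sub_of_add_le (by omega)
      have : p^[k - k' - 1] i = c := by
        rw [← hc', ← Function.iterate_succ_apply]
        have h2 : k - k' - 1 + 1 = k - k' := Nat.succ_pred_eq_of_pos hpos
        rw [Nat.succ_eq_add_one, h2]
        rw [← hk', ← Function.iterate_add_apply, Nat.sub_add_cancel hle, hk]
      exact not_inSub_child hroot hreach hc hcr ⟨k - k' - 1, this⟩
    · have : k' = k := le_antisymm hle hge
      subst this
      exact hne (hk.symm.trans hk')

end Tree
section Sep
variable {m : ℕ} {A : Type} [Fintype A] [DecidableEq A] {Atr : Fin m → Finset A}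
  {p : Fin m → Fin m} {r : Fin m}

/-- Running-intersection separator lemma: an attribute appearing both inside and
outside the subtree `T(i)` (for `i ≠ r`) must belong to `𝔸_i ∩ 𝔸_{p i}`. -/
lemma sep_lemma (hroot : p r = r) (hreach : ∀ i : Fin m, ∃ k : ℕ, p^[k] i = r)
    (hRI : ∀ a : A, ∃ t : Fin m, ∀ i : Fin m, a ∈ Atr i →
        ∃ k : ℕ, p^[k] i = t ∧ ∀ l ≤ k, a ∈ Atr (p^[l] i))
    {i : Fin m} (hir : i ≠ r) {a : A} {j j' : Fin m}
    (hj : ¬ inSub p i j) (hj' : inSub p i j') (ha : a ∈ Atr j) (ha' : a ∈ Atr j') :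
    a ∈ Atr i ∧ a ∈ Atr (p i) := by
  obtain ⟨v, hv⟩ := hRI a
  obtain ⟨k, hk, _⟩ := hv j ha
  obtain ⟨k', hk', hpath'⟩ := hv j' ha'
  have hvout : ¬ inSub p i v := by
    rintro ⟨n, hn⟩
    exact hj ⟨k + n, by rw [Nat.add_comm, Function.iterate_add_apply, hk, hn]⟩
  have hout : ¬ inSub p i (p^[k'] j') := by rw [hk']; exact hvout
  obtain ⟨l, hl, hli⟩ := exit_through i k' j' hj' hout
  have h1 : a ∈ Atr i := by rw [← hli]; exact hpath' l (Nat.le_of_lt hl)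
  have h2 : a ∈ Atr (p i) := by
    have he : p^[l + 1] j' = p (p^[l] j') := Function.iterate_succ_apply' p l j'
    have := hpath' (l + 1) (Nat.succ_le_of_lt hl)
    rw [he, hli] at this
    exact this
  exact ⟨h1, h2⟩

end Sep
section MoreRestr
variable {A : Type} [Fintype A] [DecidableEq A] {V : A → Type} [∀ a, Nonempty (V a)]

omit [Fintype A] in
lemma restr_of_full {B C : Finset A} (h : C ⊆ B) (w : ∀ a : A, V a) :
    restrAny V (C := C) (fun a : {x // x ∈ B} => w a.val)
      = fun a : {x // x ∈ C} => w a.val := by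
  funext a
  simp only [restrAny, dif_pos (h a.2)]

end MoreRestr

/-- The top factor as an explicit function. -/
noncomputable def Ffun {m : ℕ} {A : Type} [Fintype A] [DecidableEq A]
    (V : A → Type) [∀ a, Fintype (V a)] [∀ a, Nonempty (V a)]
    (Atr : Fin m → Finset A) (p : Fin m → Fin m) (r : Fin m)
    (R : ∀ i : Fin m, (∀ a : {x // x ∈ Atr i}, V a.val) → ℕ)
    (i : Fin m) (t : ∀ a : {x // x ∈ Atr i}, V a.val)
    (w : ∀ a : {x // x ∈ topAttr Atr p i}, V a.val) : ℕ :=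
  if restrAny V (C := sepAttr Atr p r i) w = restrAny V t then
    ∏ j ∈ Finset.univ.filter (fun j => ¬ inSub p i j), R j (restrAny V w)
  else 0

/-- The bottom factor (for a child `c`) as an explicit function. -/
noncomputable def Gfun {m : ℕ} {A : Type} [Fintype A] [DecidableEq A]
    (V : A → Type) [∀ a, Fintype (V a)] [∀ a, Nonempty (V a)]
    (Atr : Fin m → Finset A) (p : Fin m → Fin m) (r : Fin m)
    (R : ∀ i : Fin m, (∀ a : {x // x ∈ Atr i}, V a.val) → ℕ)
    (i : Fin m) (t : ∀ a : {x // x ∈ Atr i}, V a.val) (c : Fin m)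
    (w : ∀ a : {x // x ∈ subAttr Atr p c}, V a.val) : ℕ :=
  if restrAny V (C := sepAttr Atr p r c) w = restrAny V t then
    ∏ j ∈ Finset.univ.filter (fun j => inSub p c j), R j (restrAny V w)
  else 0

lemma sum_Ffun {m : ℕ} {A : Type} [Fintype A] [DecidableEq A]
    (V : A → Type) [∀ a, Fintype (V a)] [∀ a, Nonempty (V a)]
    (Atr : Fin m → Finset A) (p : Fin m → Fin m) (r : Fin m)
    (R : ∀ i : Fin m, (∀ a : {x // x ∈ Atr i}, V a.val) → ℕ)
    (i : Fin m) (t : ∀ a : {x // x ∈ Atr i}, V a.val) :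
    ∑ w : (∀ a : {x // x ∈ topAttr Atr p i}, V a.val), Ffun V Atr p r R i t w
      = topJ V Atr p r R i (restrAny V t) := rfl

lemma sum_Gfun {m : ℕ} {A : Type} [Fintype A] [DecidableEq A]
    (V : A → Type) [∀ a, Fintype (V a)] [∀ a, Nonempty (V a)]
    (Atr : Fin m → Finset A) (p : Fin m → Fin m) (r : Fin m)
    (R : ∀ i : Fin m, (∀ a : {x // x ∈ Atr i}, V a.val) → ℕ)
    (i : Fin m) (t : ∀ a : {x // x ∈ Atr i}, V a.val) (c : Fin m) :
    ∑ w : (∀ a : {x // x ∈ subAttr Atr p c}, V a.val), Gfun V Atr p r R i t c w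
      = botJ V Atr p r R c (restrAny V t) := rfl
section SetFacts
variable {m : ℕ} {A : Type} [Fintype A] [DecidableEq A] {Atr : Fin m → Finset A}
  {p : Fin m → Fin m} {r : Fin m}

lemma topAttr_ne_root (hreach : ∀ i : Fin m, ∃ k : ℕ, p^[k] i = r)
    {i : Fin m} {a : A} (ha : a ∈ topAttr Atr p i) : i ≠ r := by
  intro hir
  subst hir
  obtain ⟨j, hj, _⟩ := Finset.mem_biUnion.mp ha
  exact (Finset.mem_filter.mp hj).2 (hreach j)

lemma sep_subset_Atr (i : Fin m) : sepAttr Atr p r i ⊆ Atr i := by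
  unfold sepAttr
  split
  · exact Finset.empty_subset _
  · exact Finset.inter_subset_left

lemma Atr_subset_top {i j : Fin m} (hj : ¬ inSub p i j) : Atr j ⊆ topAttr Atr p i :=
  fun _ ha => Finset.mem_biUnion.mpr ⟨j, Finset.mem_filter.mpr ⟨Finset.mem_univ _, hj⟩, ha⟩

lemma Atr_subset_sub {c j : Fin m} (hj : inSub p c j) : Atr j ⊆ subAttr Atr p c :=
  fun _ ha => Finset.mem_biUnion.mpr ⟨j, Finset.mem_filter.mpr ⟨Finset.mem_univ _, hj⟩, ha⟩

lemma sep_subset_top (hroot : p r = r) (hreach : ∀ i : Fin m, ∃ k : ℕ, p^[k] i = r)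
    (i : Fin m) : sepAttr Atr p r i ⊆ topAttr Atr p i := by
  unfold sepAttr
  split
  · exact Finset.empty_subset _
  · next hir =>
    exact fun a ha =>
      Atr_subset_top (not_inSub_parent hroot hreach hir) (Finset.mem_inter.mp ha).2

lemma sep_child_subset_Atr {c i : Fin m} (hc : p c = i) (hcr : c ≠ r) :
    sepAttr Atr p r c ⊆ Atr i := by
  unfold sepAttr
  rw [if_neg hcr, hc]
  exact Finset.inter_subset_right

lemma sep_child_subset_sub {c : Fin m} :
    sepAttr Atr p r c ⊆ subAttr Atr p c :=
  (sep_subset_Atr c).trans (Atr_subset_sub (inSub_self c))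

lemma mem_sep_of_top (hroot : p r = r) (hreach : ∀ i : Fin m, ∃ k : ℕ, p^[k] i = r)
    (hRI : ∀ a : A, ∃ t : Fin m, ∀ i : Fin m, a ∈ Atr i →
        ∃ k : ℕ, p^[k] i = t ∧ ∀ l ≤ k, a ∈ Atr (p^[l] i))
    {i j' : Fin m} {a : A} (hj' : inSub p i j') (ha' : a ∈ Atr j')
    (htop : a ∈ topAttr Atr p i) : a ∈ sepAttr Atr p r i := by
  have hir : i ≠ r := topAttr_ne_root hreach htop
  obtain ⟨j, hjf, haj⟩ := Finset.mem_biUnion.mp htop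
  have hjout : ¬ inSub p i j := (Finset.mem_filter.mp hjf).2
  obtain ⟨h1, h2⟩ := sep_lemma hroot hreach hRI hir hjout hj' haj ha'
  unfold sepAttr
  rw [if_neg hir]
  exact Finset.mem_inter.mpr ⟨h1, h2⟩

lemma mem_sep_child (hroot : p r = r) (hreach : ∀ i : Fin m, ∃ k : ℕ, p^[k] i = r)
    (hRI : ∀ a : A, ∃ t : Fin m, ∀ i : Fin m, a ∈ Atr i →
        ∃ k : ℕ, p^[k] i = t ∧ ∀ l ≤ k, a ∈ Atr (p^[l] i))
    {c : Fin m} (hcr : c ≠ r) {a : A} (hsub : a ∈ subAttr Atr p c)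
    {j' : Fin m} (hout : ¬ inSub p c j') (ha' : a ∈ Atr j') :
    a ∈ sepAttr Atr p r c := by
  obtain ⟨j, hjf, haj⟩ := Finset.mem_biUnion.mp hsub
  have hjin : inSub p c j := (Finset.mem_filter.mp hjf).2
  obtain ⟨h1, h2⟩ := sep_lemma hroot hreach hRI hcr hout hjin ha' haj
  unfold sepAttr
  rw [if_neg hcr]
  exact Finset.mem_inter.mpr ⟨h1, h2⟩

end SetFacts
set_option maxHeartbeats 2000000 in
/-- correctness of the acyclic tuple-sensitivity algorithm (TSens).  In
the join-tree model, for every vertex `i` and every tuple `t` on `𝔸_i`, the upward tuple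
sensitivity factorizes as
`δ⁺(t,i) = ⊤_i(t|_{S_i}) ⬝ ∏_{c ∈ children(i)} ⊥_c(t|_{S_c})` (the factor `⊤_i(t|_{S_i})`
equals `1` when `i` is the root, by definition of `topJ`, and the product over children
is empty, hence `1`, when `i` is a leaf). -/
theorem tuple_sensitivity_factorization
    (m : ℕ) (A : Type) [Fintype A] [DecidableEq A] (V : A → Type)
    [∀ a, Fintype (V a)] [∀ a, DecidableEq (V a)] [∀ a, Nonempty (V a)]
    (Atr : Fin m → Finset A) (hcov : ∀ a : A, ∃ i : Fin m, a ∈ Atr i)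
    (p : Fin m → Fin m) (r : Fin m)
    (hroot : p r = r)
    (hreach : ∀ i : Fin m, ∃ k : ℕ, p^[k] i = r)
    (hRI : ∀ a : A, ∃ t : Fin m, ∀ i : Fin m, a ∈ Atr i →
        ∃ k : ℕ, p^[k] i = t ∧ ∀ l ≤ k, a ∈ Atr (p^[l] i))
    (R : ∀ i : Fin m, (∀ a : {x // x ∈ Atr i}, V a.val) → ℕ)
    (i : Fin m) (t : ∀ a : {x // x ∈ Atr i}, V a.val) :
    deltaP m A V Atr R i t
      = topJ V Atr p r R i (restrAny V t)
          * ∏ c ∈ Finset.univ.filter (fun c => p c = i ∧ c ≠ r),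
              botJ V Atr p r R c (restrAny V t) := by
  classical
  set K : Finset (Fin m) := Finset.univ.filter (fun c => p c = i ∧ c ≠ r) with hKdef
  have hKmem : ∀ {c : Fin m}, c ∈ K → p c = i ∧ c ≠ r := fun hc =>
    (Finset.mem_filter.mp hc).2
  -- Step 1: δ⁺ as a single indicator sum
  have key : ∀ w : (∀ a : A, V a),
      ∏ j : Fin m, insR m A V Atr R i t j (fun a => w a.val)
        = (∏ j : Fin m, R j (fun a => w a.val))
          + (if (fun a : {x // x ∈ Atr i} => w a.val) = t then 1 else 0)
            * ∏ j ∈ Finset.univ.erase i, R j (fun a => w a.val) := by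
    intro w
    rw [← Finset.mul_prod_erase Finset.univ _ (Finset.mem_univ i),
        ← Finset.mul_prod_erase Finset.univ (fun j => R j fun a => w a.val)
          (Finset.mem_univ i)]
    have h1 : ∏ j ∈ Finset.univ.erase i, insR m A V Atr R i t j (fun a => w a.val)
        = ∏ j ∈ Finset.univ.erase i, R j (fun a => w a.val) := by
      refine Finset.prod_congr rfl fun j hj => ?_
      unfold insR
      rw [Function.update_of_ne (Finset.ne_of_mem_erase hj)]
    rw [h1]
    have h2 : insR m A V Atr R i t i (fun a : {x // x ∈ Atr i} => w a.val)
        = R i (fun a => w a.val)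
          + (if (fun a : {x // x ∈ Atr i} => w a.val) = t then 1 else 0) := by
      unfold insR
      rw [Function.update_self]
      split <;> simp
    rw [h2, Nat.add_mul]
  have hdelta : deltaP m A V Atr R i t
      = ∑ w : (∀ a : A, V a),
          (if (fun a : {x // x ∈ Atr i} => w a.val) = t then 1 else 0)
            * ∏ j ∈ Finset.univ.erase i, R j (fun a => w a.val) := by
    unfold deltaP QC
    rw [Finset.sum_congr rfl (fun w _ => key w), Finset.sum_add_distrib]
    exact Nat.add_sub_cancel_left _ _
  -- nonzero-implication facts
  have hFne : ∀ u, Ffun V Atr p r R i t u ≠ 0 →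
      restrAny V (C := sepAttr Atr p r i) u = restrAny V t := by
    intro u hu
    by_contra h
    exact hu (if_neg h)
  have hGne : ∀ c u, Gfun V Atr p r R i t c u ≠ 0 →
      restrAny V (C := sepAttr Atr p r c) u = restrAny V t := by
    intro c u hu
    by_contra h
    exact hu (if_neg h)
  -- vertex partition
  have hpart : Finset.univ.erase i
      = (Finset.univ.filter fun j => ¬ inSub p i j)
        ∪ K.biUnion (fun c => Finset.univ.filter fun j => inSub p c j) := by
    ext j
    simp only [Finset.mem_erase, Finset.mem_union, Finset.mem_filter, Finset.mem_biUnion,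
      Finset.mem_univ, true_and, and_true, hKdef]
    constructor
    · intro hne
      by_cases h : inSub p i j
      · obtain ⟨c, hpc, hcr, hcj⟩ := child_of hroot hreach h hne
        exact Or.inr ⟨c, ⟨hpc, hcr⟩, hcj⟩
      · exact Or.inl h
    · rintro (h | ⟨c, ⟨hpc, hcr⟩, hcj⟩)
      · intro he; rw [he] at h; exact h (inSub_self i)
      · intro he; rw [he] at hcj; exact not_inSub_child hroot hreach hpc hcr hcj
  have hdis1 : Disjoint (Finset.univ.filter fun j => ¬ inSub p i j)
      (K.biUnion (fun c => Finset.univ.filter fun j => inSub p c j)) := by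
    rw [Finset.disjoint_left]
    intro j hj hj'
    obtain ⟨c, hcK, hc⟩ := Finset.mem_biUnion.mp hj'
    exact (Finset.mem_filter.mp hj).2
      (child_sub (hKmem hcK).1 (Finset.mem_filter.mp hc).2)
  have hdis2 : (K : Set (Fin m)).PairwiseDisjoint
      (fun c => Finset.univ.filter fun j => inSub p c j) := by
    intro c hcK c' hcK' hne
    simp only [Finset.coe_mem, Function.onFun]
    rw [Finset.disjoint_left]
    intro j hj hj'
    have hc := hKmem hcK
    have hc' := hKmem hcK'
    exact children_disjoint hroot hreach hc.1 hc.2 hc'.1 hc'.2 hne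
      (Finset.mem_filter.mp hj).2 (Finset.mem_filter.mp hj').2
  -- attribute coverage
  have hsets : (Finset.univ : Finset A)
      = Atr i ∪ (topAttr Atr p i ∪ K.biUnion (fun c => subAttr Atr p c)) := by
    ext a
    simp only [Finset.mem_univ, true_iff, Finset.mem_union, Finset.mem_biUnion]
    obtain ⟨j, haj⟩ := hcov a
    by_cases h : inSub p i j
    · by_cases hji : j = i
      · subst hji; exact Or.inl haj
      · obtain ⟨c, hpc, hcr, hcj⟩ := child_of hroot hreach h hji
        refine Or.inr (Or.inr ⟨c, ?_, Atr_subset_sub hcj haj⟩)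
        rw [hKdef]
        simp [hpc, hcr]
    · exact Or.inr (Or.inl (Atr_subset_top h haj))
  -- reindex the full sum to assignments on `univ` and factor the integrand
  have hbij : (∑ w : (∀ a : A, V a),
        (if (fun a : {x // x ∈ Atr i} => w a.val) = t then 1 else 0)
          * ∏ j ∈ Finset.univ.erase i, R j (fun a => w a.val))
      = ∑ W : (∀ a : {x // x ∈ (Finset.univ : Finset A)}, V a.val),
          (if restrAny V (C := Atr i) W = t then 1 else 0)
            * (Ffun V Atr p r R i t (restrAny V W)
              * ∏ c ∈ K, Gfun V Atr p r R i t c (restrAny V W)) := by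
    apply Finset.sum_nbij'
      (i := fun w : (∀ a : A, V a) =>
        (fun a : {x // x ∈ (Finset.univ : Finset A)} => w a.val))
      (j := fun W => fun a : A => W ⟨a, Finset.mem_univ a⟩)
    · intro w _; exact Finset.mem_univ _
    · intro W _; exact Finset.mem_univ _
    · intro w _; rfl
    · intro W _; rfl
    · intro w _
      rw [restr_of_full (Finset.subset_univ (Atr i)) w,
          restr_of_full (Finset.subset_univ (topAttr Atr p i)) w]
      by_cases hw : (fun a : {x // x ∈ Atr i} => w a.val) = t
      · rw [if_pos hw]
        simp only [one_mul]
        have hF : Ffun V Atr p r R i t (fun a : {x // x ∈ topAttr Atr p i} => w a.val)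
            = ∏ j ∈ Finset.univ.filter (fun j => ¬ inSub p i j),
                R j (fun a => w a.val) := by
          unfold Ffun
          rw [if_pos, Finset.prod_congr rfl (fun j hj => by
            rw [restr_of_full (Atr_subset_top (Finset.mem_filter.mp hj).2) w])]
          funext a
          have h1 : a.val ∈ topAttr Atr p i := sep_subset_top hroot hreach i a.2
          have h2 : a.val ∈ Atr i := sep_subset_Atr i a.2
          simp only [restrAny, dif_pos h1, dif_pos h2]
          exact congrFun hw ⟨a.val, h2⟩
        have hG : ∀ c ∈ K,
            Gfun V Atr p r R i t c (restrAny V (C := subAttr Atr p c)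
              (fun a : {x // x ∈ (Finset.univ : Finset A)} => w a.val))
            = ∏ j ∈ Finset.univ.filter (fun j => inSub p c j),
                R j (fun a => w a.val) := by
          intro c hcK
          obtain ⟨hpc, hcr⟩ := hKmem hcK
          rw [restr_of_full (Finset.subset_univ (subAttr Atr p c)) w]
          unfold Gfun
          rw [if_pos, Finset.prod_congr rfl (fun j hj => by
            rw [restr_of_full (Atr_subset_sub (Finset.mem_filter.mp hj).2) w])]
          funext a
          have h1 : a.val ∈ subAttr Atr p c := sep_child_subset_sub a.2
          have h2 : a.val ∈ Atr i := sep_child_subset_Atr hpc hcr a.2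
          simp only [restrAny, dif_pos h1, dif_pos h2]
          exact congrFun hw ⟨a.val, h2⟩
        rw [hF, Finset.prod_congr rfl hG, hpart, Finset.prod_union hdis1,
          Finset.prod_biUnion hdis2]
      · rw [if_neg hw]
        simp only [zero_mul]
  rw [hdelta, hbij, hsets]
  -- now split the sum along the three groups of blocks
  set Btop := topAttr Atr p i with hBtop
  set BU := K.biUnion (fun c => subAttr Atr p c) with hBU
  have hsubU : ∀ c ∈ K, subAttr Atr p c ⊆ Btop ∪ BU := fun c hc a ha =>
    Finset.mem_union_right _ (Finset.mem_biUnion.mpr ⟨c, hc, ha⟩)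
  have hsubU' : ∀ c ∈ K, subAttr Atr p c ⊆ BU := fun c hc a ha =>
    Finset.mem_biUnion.mpr ⟨c, hc, ha⟩
  -- step A: outer congr to compose restrictions through `Btop ∪ BU`
  have stepA : ∀ W : (∀ a : {x // x ∈ Atr i ∪ (Btop ∪ BU)}, V a.val),
      (if restrAny V (C := Atr i) W = t then 1 else 0)
        * (Ffun V Atr p r R i t (restrAny V W)
          * ∏ c ∈ K, Gfun V Atr p r R i t c (restrAny V W))
      = (fun u : (∀ a : {x // x ∈ Atr i}, V a.val) => if u = t then 1 else 0)
          (restrAny V W)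
        * (fun v : (∀ a : {x // x ∈ Btop ∪ BU}, V a.val) =>
            Ffun V Atr p r R i t (restrAny V v)
              * ∏ c ∈ K, Gfun V Atr p r R i t c (restrAny V v)) (restrAny V W) := by
    intro W
    exact congrArg₂ (· * ·) rfl (congrArg₂ (· * ·)
      (congrArg (Ffun V Atr p r R i t) (restr_restr Finset.subset_union_left W).symm)
      (Finset.prod_congr rfl fun c hc =>
        congrArg (Gfun V Atr p r R i t c) (restr_restr (hsubU c hc) W).symm))
  have compat1 : ∀ (u : (∀ a : {x // x ∈ Atr i}, V a.val))
      (v : (∀ a : {x // x ∈ Btop ∪ BU}, V a.val)),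
      (if u = t then 1 else 0) ≠ 0 →
      (Ffun V Atr p r R i t (restrAny V v)
        * ∏ c ∈ K, Gfun V Atr p r R i t c (restrAny V v)) ≠ 0 →
      restrAny V (C := Atr i ∩ (Btop ∪ BU)) u
        = restrAny V (C := Atr i ∩ (Btop ∪ BU)) v := by
    intro u v hu hv
    have hut : u = t := by
      by_contra h
      exact hu (if_neg h)
    rw [Nat.mul_ne_zero_iff] at hv
    have hFcond := hFne _ hv.1
    funext a
    have haA : a.val ∈ Atr i := (Finset.mem_inter.mp a.2).1
    have haU : a.val ∈ Btop ∪ BU := (Finset.mem_inter.mp a.2).2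
    simp only [restrAny, dif_pos haA, dif_pos haU]
    rw [hut]
    rcases Finset.mem_union.mp haU with htop | hbiu
    · have hasep : a.val ∈ sepAttr Atr p r i :=
        mem_sep_of_top hroot hreach hRI (inSub_self i) haA htop
      have hval := restr_eval hFcond hasep htop haA
      simp only [restrAny, dif_pos (Finset.mem_union_left BU htop)] at hval
      exact hval.symm
    · obtain ⟨c, hcK, hac⟩ := Finset.mem_biUnion.mp hbiu
      obtain ⟨hpc, hcr⟩ := hKmem hcK
      have hGc : Gfun V Atr p r R i t c (restrAny V v) ≠ 0 :=
        Finset.prod_ne_zero_iff.mp hv.2 c hcK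
      have hGcond := hGne c _ hGc
      have hasep : a.val ∈ sepAttr Atr p r c :=
        mem_sep_child hroot hreach hRI hcr hac
          (not_inSub_child hroot hreach hpc hcr) haA
      have hval := restr_eval hGcond hasep hac haA
      simp only [restrAny, dif_pos (Finset.mem_union_right Btop
        (Finset.mem_biUnion.mpr ⟨c, hcK, hac⟩))] at hval
      rw [dif_pos haU] at hval
      exact hval.symm
  have hH1 : (∑ u : (∀ a : {x // x ∈ Atr i}, V a.val),
      if u = t then 1 else 0) = 1 := by
    simp
  -- step B congr inside `Btop ∪ BU`
  have stepB : ∀ v : (∀ a : {x // x ∈ Btop ∪ BU}, V a.val),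
      Ffun V Atr p r R i t (restrAny V v)
        * ∏ c ∈ K, Gfun V Atr p r R i t c (restrAny V v)
      = Ffun V Atr p r R i t (restrAny V v)
        * (fun z : (∀ a : {x // x ∈ BU}, V a.val) =>
            ∏ c ∈ K, Gfun V Atr p r R i t c (restrAny V z)) (restrAny V v) := by
    intro v
    exact congrArg₂ (· * ·) rfl (Finset.prod_congr rfl fun c hc =>
      congrArg (Gfun V Atr p r R i t c) (restr_restr (hsubU' c hc) v).symm)
  have compat2 : ∀ (u : (∀ a : {x // x ∈ Btop}, V a.val))
      (z : (∀ a : {x // x ∈ BU}, V a.val)),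
      Ffun V Atr p r R i t u ≠ 0 →
      (∏ c ∈ K, Gfun V Atr p r R i t c (restrAny V z)) ≠ 0 →
      restrAny V (C := Btop ∩ BU) u = restrAny V (C := Btop ∩ BU) z := by
    intro u z hu hz
    have hFcond := hFne _ hu
    funext a
    have htop : a.val ∈ Btop := (Finset.mem_inter.mp a.2).1
    have hbiu : a.val ∈ BU := (Finset.mem_inter.mp a.2).2
    obtain ⟨c, hcK, hac⟩ := Finset.mem_biUnion.mp hbiu
    obtain ⟨hpc, hcr⟩ := hKmem hcK
    -- a is in S_c
    obtain ⟨j', hj'f, haj'⟩ := Finset.mem_biUnion.mp htop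
    have hj'out : ¬ inSub p i j' := (Finset.mem_filter.mp hj'f).2
    have hj'outc : ¬ inSub p c j' := fun h => hj'out (child_sub hpc h)
    have hasepc : a.val ∈ sepAttr Atr p r c :=
      mem_sep_child hroot hreach hRI hcr hac hj'outc haj'
    have haA : a.val ∈ Atr i := sep_child_subset_Atr hpc hcr hasepc
    -- a is in S_i
    obtain ⟨j, hjf, haj⟩ := Finset.mem_biUnion.mp hac
    have hjin : inSub p c j := (Finset.mem_filter.mp hjf).2
    have hasepi : a.val ∈ sepAttr Atr p r i :=
      mem_sep_of_top hroot hreach hRI (child_sub hpc hjin) haj htop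
    have hGc : Gfun V Atr p r R i t c (restrAny V z) ≠ 0 :=
      Finset.prod_ne_zero_iff.mp hz c hcK
    have hGcond := hGne c _ hGc
    have hval1 := restr_eval hFcond hasepi htop haA
    have hval2 := restr_eval hGcond hasepc hac haA
    simp only [restrAny, dif_pos hac] at hval2
    simp only [restrAny, dif_pos htop, dif_pos hbiu]
    rw [hval1]
    simp only [restrAny, dif_pos hbiu] at hval2
    rw [← hval2]
  have compat3 : ∀ c ∈ K, ∀ c' ∈ K, c ≠ c' →
      ∀ (u : (∀ a : {x // x ∈ subAttr Atr p c}, V a.val))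
        (v : (∀ a : {x // x ∈ subAttr Atr p c'}, V a.val)),
      Gfun V Atr p r R i t c u ≠ 0 → Gfun V Atr p r R i t c' v ≠ 0 →
      restrAny V (C := subAttr Atr p c ∩ subAttr Atr p c') u
        = restrAny V (C := subAttr Atr p c ∩ subAttr Atr p c') v := by
    intro c hcK c' hcK' hne u v hu hv
    obtain ⟨hpc, hcr⟩ := hKmem hcK
    obtain ⟨hpc', hcr'⟩ := hKmem hcK'
    have hcond := hGne c _ hu
    have hcond' := hGne c' _ hv
    funext a
    have hac : a.val ∈ subAttr Atr p c := (Finset.mem_inter.mp a.2).1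
    have hac' : a.val ∈ subAttr Atr p c' := (Finset.mem_inter.mp a.2).2
    obtain ⟨j, hjf, haj⟩ := Finset.mem_biUnion.mp hac
    obtain ⟨j', hj'f, haj'⟩ := Finset.mem_biUnion.mp hac'
    have hjin : inSub p c j := (Finset.mem_filter.mp hjf).2
    have hj'in : inSub p c' j' := (Finset.mem_filter.mp hj'f).2
    have hj'out : ¬ inSub p c j' :=
      children_disjoint hroot hreach hpc' hcr' hpc hcr hne.symm hj'in
    have hjout : ¬ inSub p c' j :=
      children_disjoint hroot hreach hpc hcr hpc' hcr' hne hjin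
    have hasepc : a.val ∈ sepAttr Atr p r c :=
      mem_sep_child hroot hreach hRI hcr hac hj'out haj'
    have hasepc' : a.val ∈ sepAttr Atr p r c' :=
      mem_sep_child hroot hreach hRI hcr' hac' hjout haj
    have haA : a.val ∈ Atr i := sep_child_subset_Atr hpc hcr hasepc
    have hval1 := restr_eval hcond hasepc hac haA
    have hval2 := restr_eval hcond' hasepc' hac' haA
    simp only [restrAny, dif_pos hac, dif_pos hac']
    rw [hval1, hval2]
  calc ∑ W : (∀ a : {x // x ∈ Atr i ∪ (Btop ∪ BU)}, V a.val),
        (if restrAny V (C := Atr i) W = t then 1 else 0)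
          * (Ffun V Atr p r R i t (restrAny V W)
            * ∏ c ∈ K, Gfun V Atr p r R i t c (restrAny V W))
      = ∑ W : (∀ a : {x // x ∈ Atr i ∪ (Btop ∪ BU)}, V a.val),
          (fun u : (∀ a : {x // x ∈ Atr i}, V a.val) => if u = t then 1 else 0)
            (restrAny V W)
          * (fun v : (∀ a : {x // x ∈ Btop ∪ BU}, V a.val) =>
              Ffun V Atr p r R i t (restrAny V v)
                * ∏ c ∈ K, Gfun V Atr p r R i t c (restrAny V v)) (restrAny V W) :=
        Finset.sum_congr rfl (fun W _ => stepA W)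
    _ = (∑ u : (∀ a : {x // x ∈ Atr i}, V a.val), if u = t then 1 else 0)
          * ∑ v : (∀ a : {x // x ∈ Btop ∪ BU}, V a.val),
              Ffun V Atr p r R i t (restrAny V v)
                * ∏ c ∈ K, Gfun V Atr p r R i t c (restrAny V v) :=
        split_sum _ _ _ _ compat1
    _ = ∑ v : (∀ a : {x // x ∈ Btop ∪ BU}, V a.val),
          Ffun V Atr p r R i t (restrAny V v)
            * ∏ c ∈ K, Gfun V Atr p r R i t c (restrAny V v) := by
        rw [hH1, one_mul]
    _ = ∑ v : (∀ a : {x // x ∈ Btop ∪ BU}, V a.val),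
          Ffun V Atr p r R i t (restrAny V v)
            * (fun z : (∀ a : {x // x ∈ BU}, V a.val) =>
                ∏ c ∈ K, Gfun V Atr p r R i t c (restrAny V z)) (restrAny V v) :=
        Finset.sum_congr rfl (fun v _ => stepB v)
    _ = (∑ u : (∀ a : {x // x ∈ Btop}, V a.val), Ffun V Atr p r R i t u)
          * ∑ z : (∀ a : {x // x ∈ BU}, V a.val),
              ∏ c ∈ K, Gfun V Atr p r R i t c (restrAny V z) :=
        split_sum _ _ _ _ compat2
    _ = topJ V Atr p r R i (restrAny V t)
          * ∏ c ∈ K, botJ V Atr p r R c (restrAny V t) := by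
        rw [sum_Ffun, multi_split K _ _ compat3]
        exact congrArg (HMul.hMul (topJ V Atr p r R i (restrAny V t)))
          (Finset.prod_congr rfl (fun c _ => sum_Gfun V Atr p r R i t c))
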